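/- arXiv:2111.13631 — 5 statements merged into one kernel-verified Lean document; each statement's English description precedes it below -/
import Mathlib

section
/- Let φ : ℝ → ℝ be smooth (C^∞) with φ^{(m)}(0) = 0 for every m ∈ ℕ (including m = 0, i.e. φ is flat at 0). Define g : ℝ → ℝ by g(r) = φ(√r) for r ≥ 0 and g(r) = 0 for r < 0. Then g is smooth on ℝ. -/
open Filter Set Topology

/-- If `f` is smooth and flat at `0`, then `|f x| ≤ ε |x|^m` near `0`. -/
lemma flat_bound : ∀ (m : ℕ) (f : ℝ → ℝ), ContDiff ℝ (⊤ : ℕ∞) f →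
    (∀ j : ℕ, iteratedDeriv j f 0 = 0) → ∀ ε > 0, ∀ᶠ x in 𝓝 (0:ℝ), |f x| ≤ ε * |x| ^ m := by
  intro m
  induction m with
  | zero =>
    intro f hf hflat ε hε
    have h0 : f 0 = 0 := by simpa [iteratedDeriv_zero] using hflat 0
    have ht : Tendsto f (𝓝 0) (𝓝 0) := by
      simpa [h0] using hf.continuous.tendsto 0
    filter_upwards [NormedAddCommGroup.tendsto_nhds_zero.mp ht ε hε] with x hx
    simpa using hx.le
  | succ m ih =>
    intro f hf hflat ε hε
    have hd : ContDiff ℝ (⊤ : ℕ∞) (deriv f) := (contDiff_infty_iff_deriv.mp hf).2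
    have hdflat : ∀ j : ℕ, iteratedDeriv j (deriv f) 0 = 0 := fun j => by
      rw [← iteratedDeriv_succ']; exact hflat (j + 1)
    obtain ⟨δ, hδ, hb⟩ := Metric.eventually_nhds_iff.mp (ih (deriv f) hd hdflat ε hε)
    rw [Metric.eventually_nhds_iff]
    refine ⟨δ, hδ, fun x hx => ?_⟩
    rw [Real.dist_eq, sub_zero] at hx
    have h0 : f 0 = 0 := by simpa [iteratedDeriv_zero] using hflat 0
    have habs : ∀ y ∈ uIcc (0:ℝ) x, |y| ≤ |x| := by
      intro y hy
      rcases le_total (0:ℝ) x with h | h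
      · rw [uIcc_of_le h] at hy
        rw [abs_of_nonneg hy.1, abs_of_nonneg h]; exact hy.2
      · rw [uIcc_of_ge h] at hy
        rw [abs_of_nonpos hy.2, abs_of_nonpos h]; linarith [hy.1]
    have key : ∀ y ∈ uIcc (0:ℝ) x, ‖deriv f y‖ ≤ ε * |x| ^ m := by
      intro y hy
      have h1 : |deriv f y| ≤ ε * |y| ^ m := by
        refine hb ?_
        rw [Real.dist_eq, sub_zero]
        exact lt_of_le_of_lt (habs y hy) hx
      refine h1.trans ?_
      exact mul_le_mul_of_nonneg_left (pow_le_pow_left₀ (abs_nonneg y) (habs y hy) m) hε.le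
    have hder : ∀ y ∈ uIcc (0:ℝ) x, HasDerivWithinAt f (deriv f y) (uIcc (0:ℝ) x) y := by
      intro y _
      exact ((hf.differentiable (by simp)) y).hasDerivAt.hasDerivWithinAt
    have := (convex_uIcc (0:ℝ) x).norm_image_sub_le_of_norm_hasDerivWithin_le hder key
      left_mem_uIcc right_mem_uIcc
    rw [h0, sub_zero, sub_zero] at this
    calc |f x| ≤ ε * |x| ^ m * ‖x‖ := this
    _ = ε * |x| ^ (m + 1) := by rw [Real.norm_eq_abs, pow_succ]; ring

lemma flat_tendsto (m : ℕ) (f : ℝ → ℝ) (hf : ContDiff ℝ (⊤ : ℕ∞) f)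
    (hflat : ∀ j : ℕ, iteratedDeriv j f 0 = 0) :
    Tendsto (fun x => f x / x ^ m) (𝓝 (0:ℝ)) (𝓝 0) := by
  have h0 : f 0 = 0 := by simpa [iteratedDeriv_zero] using hflat 0
  rw [NormedAddCommGroup.tendsto_nhds_zero]
  intro ε hε
  filter_upwards [flat_bound m f hf hflat (ε / 2) (by positivity)] with x hx
  rcases eq_or_ne x 0 with rfl | hx0
  · simp [h0, hε]
  · have hxpos : (0:ℝ) < |x| ^ m := pow_pos (abs_pos.mpr hx0) m
    have heq : ‖f x / x ^ m‖ = |f x| / |x| ^ m := by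
      rw [Real.norm_eq_abs, abs_div, abs_pow]
    rw [heq]
    have : |f x| / |x| ^ m ≤ ε / 2 := (div_le_iff₀ hxpos).mpr (by linarith)
    linarith

lemma smooth_iteratedDeriv (φ : ℝ → ℝ) (hφ : ContDiff ℝ (⊤ : ℕ∞) φ) (j : ℕ) :
    ContDiff ℝ (⊤ : ℕ∞) (iteratedDeriv j φ) := by
  rw [iteratedDeriv_eq_iterate]
  exact hφ.iterate_deriv j

lemma flat_iteratedDeriv (φ : ℝ → ℝ) (hflat : ∀ m : ℕ, iteratedDeriv m φ 0 = 0) (j : ℕ) :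
    ∀ i : ℕ, iteratedDeriv i (iteratedDeriv j φ) 0 = 0 := by
  intro i
  rw [iteratedDeriv_eq_iterate, iteratedDeriv_eq_iterate, ← Function.iterate_add_apply]
  have := hflat (i + j)
  rwa [iteratedDeriv_eq_iterate] at this

lemma hasDerivAt_inv_pow {s : ℝ} (hs : s ≠ 0) (p : ℕ) :
    HasDerivAt (fun x : ℝ => (x⁻¹) ^ p) (-(p : ℝ) * (s⁻¹) ^ (p + 1)) s := by
  cases p with
  | zero => simpa using hasDerivAt_const s (1:ℝ)
  | succ p =>
    have h1 : HasDerivAt (fun x : ℝ => x⁻¹) (-(s ^ 2)⁻¹) s := hasDerivAt_inv hs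
    have h2 := h1.fun_pow (p + 1)
    refine h2.congr_deriv ?_
    rw [Nat.add_sub_cancel, show (s ^ 2)⁻¹ = s⁻¹ ^ 2 by rw [inv_pow]]
    push_cast
    ring

noncomputable def psiAux (φ : ℝ → ℝ) : ℕ → ℝ → ℝ
  | 0 => φ
  | k + 1 => fun s => deriv (psiAux φ k) s / (2 * s)

noncomputable def tval (φ : ℝ → ℝ) (q : ℝ × ℕ × ℕ) (s : ℝ) : ℝ :=
  q.1 * (iteratedDeriv q.2.1 φ s * (s⁻¹) ^ q.2.2)

noncomputable def sumfun (φ : ℝ → ℝ) (L : List (ℝ × ℕ × ℕ)) (s : ℝ) : ℝ :=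
  (L.map (fun q => tval φ q s)).sum

noncomputable def stepL (L : List (ℝ × ℕ × ℕ)) : List (ℝ × ℕ × ℕ) :=
  (L.map fun q => (q.1 / 2, q.2.1 + 1, q.2.2 + 1)) ++
    (L.map fun q => (-(q.1 * (q.2.2 : ℝ)) / 2, q.2.1, q.2.2 + 2))

lemma tval_hasDerivAt (φ : ℝ → ℝ) (hφ : ContDiff ℝ (⊤ : ℕ∞) φ) (q : ℝ × ℕ × ℕ) {s : ℝ}
    (hs : s ≠ 0) :
    HasDerivAt (fun x => tval φ q x)
      ((tval φ (q.1 / 2, q.2.1 + 1, q.2.2 + 1) s +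
        tval φ (-(q.1 * q.2.2) / 2, q.2.1, q.2.2 + 2) s) * (2 * s)) s := by
  obtain ⟨c, j, p⟩ := q
  have hfd : HasDerivAt (iteratedDeriv j φ) (iteratedDeriv (j + 1) φ s) s := by
    rw [iteratedDeriv_succ]
    exact (((smooth_iteratedDeriv φ hφ j).differentiable (by simp)) s).hasDerivAt
  have h := (hfd.fun_mul (hasDerivAt_inv_pow hs p)).const_mul c
  refine h.congr_deriv ?_
  simp only [tval, inv_pow]
  field_simp
  ring

lemma sumfun_hasDerivAt (φ : ℝ → ℝ) (hφ : ContDiff ℝ (⊤ : ℕ∞) φ) (L : List (ℝ × ℕ × ℕ)) {s : ℝ}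
    (hs : s ≠ 0) :
    HasDerivAt (fun x => sumfun φ L x) (sumfun φ (stepL L) s * (2 * s)) s := by
  induction L with
  | nil => simpa [sumfun, stepL] using hasDerivAt_const s (0:ℝ)

  | cons q T ih =>
    have heq : (fun x => sumfun φ (q :: T) x) = fun x => tval φ q x + sumfun φ T x := by
      funext x; simp [sumfun]
    rw [heq]
    have h := (tval_hasDerivAt φ hφ q hs).fun_add ih
    refine h.congr_deriv ?_
    simp only [sumfun, stepL, List.map_cons, List.map_append, List.sum_cons, List.sum_append]
    ring



lemma psi_rep (φ : ℝ → ℝ) (hφ : ContDiff ℝ (⊤ : ℕ∞) φ) :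
    ∀ k : ℕ, ∃ L : List (ℝ × ℕ × ℕ), ∀ s : ℝ, s ≠ 0 → psiAux φ k s = sumfun φ L s := by
  intro k
  induction k with
  | zero =>
    refine ⟨[(1, 0, 0)], fun s hs => ?_⟩
    simp [psiAux, sumfun, tval, iteratedDeriv_zero]
  | succ k ih =>
    obtain ⟨L, hL⟩ := ih
    refine ⟨stepL L, fun s hs => ?_⟩
    have hev : psiAux φ k =ᶠ[𝓝 s] fun x => sumfun φ L x := by
      filter_upwards [compl_singleton_mem_nhds hs] with x hx using hL x hx
    have hD : HasDerivAt (psiAux φ k) (sumfun φ (stepL L) s * (2 * s)) s :=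
      (sumfun_hasDerivAt φ hφ L hs).congr_of_eventuallyEq hev
    show deriv (psiAux φ k) s / (2 * s) = _
    rw [hD.deriv, mul_div_cancel_right₀ _ (mul_ne_zero two_ne_zero hs)]

lemma psi_hasDerivAt (φ : ℝ → ℝ) (hφ : ContDiff ℝ (⊤ : ℕ∞) φ) (k : ℕ) {s : ℝ} (hs : s ≠ 0) :
    HasDerivAt (psiAux φ k) (psiAux φ (k + 1) s * (2 * s)) s := by
  obtain ⟨L, hL⟩ := psi_rep φ hφ k
  have hev : psiAux φ k =ᶠ[𝓝 s] fun x => sumfun φ L x := by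
    filter_upwards [compl_singleton_mem_nhds hs] with x hx using hL x hx
  have hD : HasDerivAt (psiAux φ k) (sumfun φ (stepL L) s * (2 * s)) s :=
    (sumfun_hasDerivAt φ hφ L hs).congr_of_eventuallyEq hev
  have hval : psiAux φ (k + 1) s = sumfun φ (stepL L) s := by
    show deriv (psiAux φ k) s / (2 * s) = _
    rw [hD.deriv, mul_div_cancel_right₀ _ (mul_ne_zero two_ne_zero hs)]
  rw [hval]
  exact hD

lemma psi_zero (φ : ℝ → ℝ) (hflat : ∀ m : ℕ, iteratedDeriv m φ 0 = 0) (k : ℕ) :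
    psiAux φ k 0 = 0 := by
  cases k with
  | zero => simpa [iteratedDeriv_zero, psiAux] using hflat 0
  | succ k => show deriv (psiAux φ k) 0 / (2 * 0) = 0; rw [mul_zero, div_zero]

lemma sumfun_tendsto (φ : ℝ → ℝ) (hφ : ContDiff ℝ (⊤ : ℕ∞) φ)
    (hflat : ∀ m : ℕ, iteratedDeriv m φ 0 = 0) (L : List (ℝ × ℕ × ℕ)) (m : ℕ) :
    Tendsto (fun s => sumfun φ L s / s ^ m) (𝓝[>] (0:ℝ)) (𝓝 0) := by
  induction L with
  | nil =>
    have : (fun s : ℝ => sumfun φ [] s / s ^ m) = fun _ => (0:ℝ) := by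
      funext s; simp [sumfun]
    rw [this]; exact tendsto_const_nhds
  | cons q T ih =>
    have hterm : Tendsto (fun s => tval φ q s / s ^ m) (𝓝[>] (0:ℝ)) (𝓝 0) := by
      have hbase : Tendsto (fun s : ℝ => iteratedDeriv q.2.1 φ s / s ^ (q.2.2 + m)) (𝓝 0) (𝓝 0) :=
        flat_tendsto _ _ (smooth_iteratedDeriv φ hφ q.2.1) (flat_iteratedDeriv φ hflat q.2.1)
      have h2 : Tendsto (fun s : ℝ => q.1 * (iteratedDeriv q.2.1 φ s / s ^ (q.2.2 + m)))
          (𝓝[>] (0:ℝ)) (𝓝 (q.1 * 0)) :=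
        (hbase.const_mul q.1).mono_left nhdsWithin_le_nhds
      rw [mul_zero] at h2
      refine h2.congr' ?_
      filter_upwards [self_mem_nhdsWithin] with s hs
      have hs0 : s ≠ 0 := ne_of_gt hs
      simp only [tval, inv_pow]
      rw [pow_add, ← div_div, ← div_eq_mul_inv, mul_div_assoc]
    have heq : (fun s => sumfun φ (q :: T) s / s ^ m)
        = fun s => tval φ q s / s ^ m + sumfun φ T s / s ^ m := by
      funext s; simp [sumfun, add_div]
    rw [heq]
    simpa using hterm.add ih

lemma psi_tendsto (φ : ℝ → ℝ) (hφ : ContDiff ℝ (⊤ : ℕ∞) φ)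
    (hflat : ∀ m : ℕ, iteratedDeriv m φ 0 = 0) (k m : ℕ) :
    Tendsto (fun s => psiAux φ k s / s ^ m) (𝓝[>] (0:ℝ)) (𝓝 0) := by
  obtain ⟨L, hL⟩ := psi_rep φ hφ k
  refine (sumfun_tendsto φ hφ hflat L m).congr' ?_
  filter_upwards [self_mem_nhdsWithin] with s hs
  rw [hL s (ne_of_gt hs)]

/-- If `φ : ℝ → ℝ` is smooth and flat at `0` (all derivatives,
including the value, vanish at `0`), then `g(r) = φ(√r)` for `r ≥ 0`, `g(r) = 0`
for `r < 0`, defines a smooth function on `ℝ`. -/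
theorem stmt_3 (φ : ℝ → ℝ) (hφ : ContDiff ℝ (⊤ : ℕ∞) φ)
    (hflat : ∀ m : ℕ, iteratedDeriv m φ 0 = 0) :
    ContDiff ℝ (⊤ : ℕ∞) (fun r : ℝ => if 0 ≤ r then φ (Real.sqrt r) else 0) := by
  -- sqrt tends to 0⁺ within 0⁺
  have hsqrt : Tendsto Real.sqrt (𝓝[>] (0:ℝ)) (𝓝[>] (0:ℝ)) := by
    rw [tendsto_nhdsWithin_iff]
    constructor
    · have := Real.continuous_sqrt.tendsto 0
      simpa using this.mono_left nhdsWithin_le_nhds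
    · filter_upwards [self_mem_nhdsWithin] with x hx
      exact Real.sqrt_pos.mpr hx
  -- negative values of sqrt
  have hneg : ∀ x : ℝ, x ≤ 0 → Real.sqrt x = 0 := fun x hx => Real.sqrt_eq_zero'.mpr hx
  -- key derivative fact
  have hDeriv : ∀ (k : ℕ) (r : ℝ),
      HasDerivAt (fun r => psiAux φ k (Real.sqrt r)) (psiAux φ (k + 1) (Real.sqrt r)) r := by
    intro k r
    rcases lt_trichotomy r 0 with hr | hr | hr
    · -- r < 0 : locally zero
      have hev : (fun r => psiAux φ k (Real.sqrt r)) =ᶠ[𝓝 r] fun _ => (0:ℝ) := by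
        filter_upwards [Iio_mem_nhds hr] with x hx
        rw [hneg x (le_of_lt hx), psi_zero φ hflat k]
      rw [hneg r hr.le, psi_zero φ hflat (k + 1)]
      exact (hasDerivAt_const r (0:ℝ)).congr_of_eventuallyEq hev
    · -- r = 0
      subst hr
      rw [Real.sqrt_zero, psi_zero φ hflat (k + 1)]
      rw [hasDerivAt_iff_tendsto_slope]
      have hslope : slope (fun r => psiAux φ k (Real.sqrt r)) 0
          = fun x => psiAux φ k (Real.sqrt x) / x := by
        funext x
        rw [slope_def_field]
        rw [Real.sqrt_zero, psi_zero φ hflat k, sub_zero, sub_zero]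
      rw [hslope, ← nhdsLT_sup_nhdsGT, tendsto_sup]
      constructor
      · -- from the left : function is 0
        have : Tendsto (fun _ : ℝ => (0:ℝ)) (𝓝[<] (0:ℝ)) (𝓝 0) := tendsto_const_nhds
        refine this.congr' ?_
        filter_upwards [self_mem_nhdsWithin] with x hx
        rw [hneg x (le_of_lt hx), psi_zero φ hflat k, zero_div]
      · -- from the right
        have h2 := (psi_tendsto φ hφ hflat k 2).comp hsqrt
        refine h2.congr' ?_
        filter_upwards [self_mem_nhdsWithin] with x hx
        simp only [Function.comp_apply]
        rw [Real.sq_sqrt (le_of_lt hx)]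
    · -- r > 0
      have hs : (0:ℝ) < Real.sqrt r := Real.sqrt_pos.mpr hr
      have h1 := psi_hasDerivAt φ hφ k (ne_of_gt hs)
      have h2 := Real.hasDerivAt_sqrt (ne_of_gt hr)
      have h3 := h1.comp r h2
      have : psiAux φ (k + 1) (Real.sqrt r) * (2 * Real.sqrt r) * (1 / (2 * Real.sqrt r))
          = psiAux φ (k + 1) (Real.sqrt r) := by
        field_simp
      rw [this] at h3
      exact h3
  have hCont : ∀ k : ℕ, Continuous (fun r => psiAux φ k (Real.sqrt r)) :=
    fun k => continuous_iff_continuousAt.mpr fun r => (hDeriv k r).continuousAt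
  have hmain : ∀ (n : ℕ) (k : ℕ), ContDiff ℝ (n : ℕ∞) (fun r => psiAux φ k (Real.sqrt r)) := by
    intro n
    induction n with
    | zero => intro k; exact contDiff_zero.mpr (hCont k)
    | succ n ih =>
      intro k
      have hcast : (((n + 1 : ℕ) : ℕ∞) : WithTop ℕ∞) = (((n : ℕ) : ℕ∞) : WithTop ℕ∞) + 1 := by
        norm_cast
      rw [hcast]
      refine contDiff_succ_iff_deriv.mpr ⟨fun r => (hDeriv k r).differentiableAt, ?_, ?_⟩
      · intro h; exact absurd h (by simp)
      · have hd : deriv (fun r => psiAux φ k (Real.sqrt r))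
            = fun r => psiAux φ (k + 1) (Real.sqrt r) := by
          funext r; exact (hDeriv k r).deriv
        rw [hd]
        exact ih (k + 1)
  have hfun : (fun r : ℝ => if 0 ≤ r then φ (Real.sqrt r) else 0)
      = fun r => psiAux φ 0 (Real.sqrt r) := by
    funext r
    by_cases hr : 0 ≤ r
    · rw [if_pos hr]; rfl
    · have h0 : φ 0 = 0 := by simpa [iteratedDeriv_zero] using hflat 0
      rw [if_neg hr, show psiAux φ 0 = φ from rfl, hneg r (le_of_not_ge hr), h0]
  rw [hfun]
  exact contDiff_infty.mpr fun n => hmain n 0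
end

section
/- Let n ≥ 1 and let φ₁, φ₂ : ℝ × ℝⁿ → ℝ × ℝⁿ be smooth maps, each of the form φ = (f, g) where f : ℝ × ℝⁿ → ℝ is odd in ρ and g : ℝ × ℝⁿ → ℝⁿ has every component even in ρ. Then the composition φ₂ ∘ φ₁ is also of this form: its first component is odd in ρ and the components of its ℝⁿ-valued part are even in ρ. -/
/-- A smooth function `F : ℝ × ℝⁿ → ℝ` is *odd in ρ* if all even-order partial
derivatives in the first variable vanish at every point `(0, s)`. -/
def OddInRho (n : ℕ) (F : ℝ × (Fin n → ℝ) → ℝ) : Prop :=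
  ∀ (s : Fin n → ℝ) (m : ℕ), Even m → iteratedDeriv m (fun ρ : ℝ => F (ρ, s)) 0 = 0

/-- A smooth function `F : ℝ × ℝⁿ → ℝ` is *even in ρ* if all odd-order partial
derivatives in the first variable vanish at every point `(0, s)`. -/
def EvenInRho (n : ℕ) (F : ℝ × (Fin n → ℝ) → ℝ) : Prop :=
  ∀ (s : Fin n → ℝ) (m : ℕ), Odd m → iteratedDeriv m (fun ρ : ℝ => F (ρ, s)) 0 = 0

noncomputable section StmtFourAux

open Function

variable {n : ℕ} {E : Type*} [NormedAddCommGroup E] [NormedSpace ℝ E]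

local notation "X" => ℝ × (Fin n → ℝ)

/-- directional (partial) derivative operator -/
private def pd (v : ℝ × (Fin n → ℝ)) (H : ℝ × (Fin n → ℝ) → E) :
    ℝ × (Fin n → ℝ) → E :=
  fun x => fderiv ℝ H x v

private lemma pd_eq_comp (v : X) (H : X → E) :
    pd v H = (ContinuousLinearMap.apply ℝ E v) ∘ (fderiv ℝ H) := rfl

private lemma top_add_one_le : ((⊤ : ℕ∞) : WithTop ℕ∞) + 1 ≤ ((⊤ : ℕ∞) : WithTop ℕ∞) := by
  norm_cast

private lemma natCast_le_top (i : ℕ) : (i : WithTop ℕ∞) ≤ ((⊤ : ℕ∞) : WithTop ℕ∞) := by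
  exact_mod_cast le_top

private lemma pd_contDiff (v : X) {H : X → E} (hH : ContDiff ℝ (⊤ : ℕ∞) H) :
    ContDiff ℝ (⊤ : ℕ∞) (pd v H) := by
  rw [pd_eq_comp]
  exact (ContinuousLinearMap.apply ℝ E v).contDiff.comp (hH.fderiv_right top_add_one_le)

private lemma pd_iterate_contDiff (v : X) {H : X → E} (hH : ContDiff ℝ (⊤ : ℕ∞) H) (k : ℕ) :
    ContDiff ℝ (⊤ : ℕ∞) ((pd v)^[k] H) := by
  induction k generalizing H with
  | zero => exact hH
  | succ k ih => rw [Function.iterate_succ_apply]; exact ih (pd_contDiff v hH)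

private lemma fderiv_pd {H : X → E} (hH : ContDiff ℝ (⊤ : ℕ∞) H) (x v w : X) :
    fderiv ℝ (pd w H) x v = fderiv ℝ (fderiv ℝ H) x v w := by
  have hd : DifferentiableAt ℝ (fderiv ℝ H) x :=
    ((hH.fderiv_right top_add_one_le).differentiable
      (by simp)).differentiableAt
  rw [pd_eq_comp, fderiv_comp x (ContinuousLinearMap.apply ℝ E w).differentiableAt hd,
    ContinuousLinearMap.fderiv]
  rfl

private lemma pd_comm {H : X → E} (hH : ContDiff ℝ (⊤ : ℕ∞) H) (v w : X) :
    pd v (pd w H) = pd w (pd v H) := by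
  funext x
  have hsymm : IsSymmSndFDerivAt ℝ H x := by
    apply hH.contDiffAt.isSymmSndFDerivAt
    simpa using natCast_le_top 2
  show fderiv ℝ (pd w H) x v = fderiv ℝ (pd v H) x w
  rw [fderiv_pd hH, fderiv_pd hH]
  exact hsymm.eq v w

private lemma pd_iterate_comm {H : X → E} (hH : ContDiff ℝ (⊤ : ℕ∞) H) (v w : X) (k : ℕ) :
    (pd v)^[k] (pd w H) = pd w ((pd v)^[k] H) := by
  induction k generalizing H with
  | zero => rfl
  | succ k ih =>
    rw [Function.iterate_succ_apply, Function.iterate_succ_apply,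
      pd_comm hH v w, ih (pd_contDiff v hH)]

/-- the line direction -/
private def e₀ : ℝ × (Fin n → ℝ) := (1, 0)

private lemma line_hasDerivAt {H : X → E} (hH : ContDiff ℝ (⊤ : ℕ∞) H)
    (s : Fin n → ℝ) (ρ : ℝ) :
    HasDerivAt (fun ρ : ℝ => H (ρ, s)) (pd (e₀ (n := n)) H (ρ, s)) ρ := by
  have hline : HasDerivAt (fun ρ : ℝ => ((ρ, s) : X)) ((1 : ℝ), (0 : Fin n → ℝ)) ρ :=
    (hasDerivAt_id ρ).prodMk (hasDerivAt_const ρ s)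
  have hd : DifferentiableAt ℝ H ((ρ, s) : X) :=
    (hH.differentiable (by simp)).differentiableAt
  exact hd.hasFDerivAt.comp_hasDerivAt ρ hline

/-- Iterated derivative along a horizontal line computed via iterated partial
derivatives in the direction `e₀`. -/
private lemma iteratedDeriv_line {H : X → E} (hH : ContDiff ℝ (⊤ : ℕ∞) H)
    (s : Fin n → ℝ) (k : ℕ) (ρ : ℝ) :
    iteratedDeriv k (fun ρ : ℝ => H (ρ, s)) ρ = ((pd (e₀ (n := n)))^[k] H) (ρ, s) := by
  induction k generalizing H with
  | zero => simp [iteratedDeriv_zero]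
  | succ k ih =>
    rw [iteratedDeriv_succ']
    have hder : deriv (fun ρ : ℝ => H (ρ, s)) = fun ρ : ℝ => pd (e₀ (n := n)) H (ρ, s) := by
      funext ρ'
      exact (line_hasDerivAt hH s ρ').deriv
    rw [hder, ih (pd_contDiff _ hH), Function.iterate_succ_apply]

private lemma iteratedFDeriv_succ_pd {H : X → E} (hH : ContDiff ℝ (⊤ : ℕ∞) H)
    (m : ℕ) (x : X) (v : Fin (m + 1) → X) :
    iteratedFDeriv ℝ (m + 1) H x v
      = iteratedFDeriv ℝ m (pd (v (Fin.last m)) H) x (Fin.init v) := by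
  rw [iteratedFDeriv_succ_apply_right]
  have hcomp := (ContinuousLinearMap.apply ℝ E (v (Fin.last m))).iteratedFDeriv_comp_left
    ((hH.fderiv_right top_add_one_le).contDiffAt (x := x)) (natCast_le_top m)
  rw [pd_eq_comp, hcomp]
  rfl

private lemma iteratedFDeriv_pd_iterate {H : X → E} (hH : ContDiff ℝ (⊤ : ℕ∞) H)
    (k : ℕ) (x : X) :
    iteratedFDeriv ℝ k H x (fun _ => (e₀ (n := n))) = ((pd (e₀ (n := n)))^[k] H) x := by
  induction k generalizing H with
  | zero => simp
  | succ k ih =>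
    rw [iteratedFDeriv_succ_pd hH]
    have : (Fin.init fun _ : Fin (k + 1) => (e₀ (n := n))) = fun _ : Fin k => (e₀ (n := n)) := rfl
    rw [this, ih (pd_contDiff _ hH), Function.iterate_succ_apply]

/-- flatness along the hyperplane, formulated with iterated partial derivatives -/
private def PFlat (H : ℝ × (Fin n → ℝ) → E) : Prop :=
  ∀ (s : Fin n → ℝ) (k : ℕ), ((pd (e₀ (n := n)))^[k] H) (0, s) = 0

private lemma pflat_pd {H : X → E} (hH : ContDiff ℝ (⊤ : ℕ∞) H) (hf : PFlat H) (v : X) :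
    PFlat (pd v H) := by
  intro s k
  rw [pd_iterate_comm hH]
  set G := (pd (e₀ (n := n)))^[k] H with hG
  have hGsm : ContDiff ℝ (⊤ : ℕ∞) G := pd_iterate_contDiff _ hH k
  have hG0 : ∀ s' : Fin n → ℝ, G (0, s') = 0 := fun s' => hf s' k
  have hsplit : v = v.1 • (e₀ (n := n)) + ((0 : ℝ), v.2) := by
    ext <;> simp [e₀]
  show fderiv ℝ G ((0 : ℝ), s) v = 0
  rw [hsplit, map_add, map_smul]
  have h1 : fderiv ℝ G ((0 : ℝ), s) (e₀ (n := n)) = 0 := by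
    have h := hf s (k + 1)
    rw [Function.iterate_succ_apply'] at h
    rw [hG]
    exact h
  have h2 : fderiv ℝ G ((0 : ℝ), s) (((0 : ℝ), v.2) : X) = 0 := by
    -- derivative along a curve inside the hyperplane, where G vanishes
    have hc : HasDerivAt (fun t : ℝ => (((0 : ℝ), s + t • v.2) : X))
        (((0 : ℝ), v.2) : X) 0 := by
      refine (hasDerivAt_const (0 : ℝ) (0 : ℝ)).prodMk ?_
      simpa using ((hasDerivAt_id (0 : ℝ)).smul_const v.2).const_add s
    have hcomp : HasDerivAt (fun t : ℝ => G ((0 : ℝ), s + t • v.2))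
        (fderiv ℝ G ((0 : ℝ), s) (((0 : ℝ), v.2) : X)) 0 := by
      have hd : DifferentiableAt ℝ G (((0 : ℝ), s + (0 : ℝ) • v.2) : X) :=
        (hGsm.differentiable (by simp)).differentiableAt
      have := hd.hasFDerivAt.comp_hasDerivAt 0 hc
      simpa [Function.comp_def] using this
    have hzero : (fun t : ℝ => G ((0 : ℝ), s + t • v.2)) = fun _ => 0 := by
      funext t; exact hG0 _
    rw [hzero] at hcomp
    have h0 : HasDerivAt (fun _ : ℝ => (0 : E)) 0 0 := hasDerivAt_const 0 0
    exact (hcomp.unique h0)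
  rw [h1, h2, smul_zero, add_zero]

private lemma pflat_iteratedFDeriv {H : X → E} (hH : ContDiff ℝ (⊤ : ℕ∞) H)
    (hf : PFlat H) (m : ℕ) (s : Fin n → ℝ) :
    iteratedFDeriv ℝ m H ((0 : ℝ), s) = 0 := by
  induction m generalizing H with
  | zero =>
    ext v
    have h0 : H ((0 : ℝ), s) = 0 := hf s 0
    simp [h0]
  | succ m ih =>
    ext v
    rw [iteratedFDeriv_succ_pd hH]
    rw [ih (pd_contDiff _ hH) (pflat_pd hH hf _)]
    simp

/-- The reflection `σ(ρ, s) = (-ρ, s)` as a continuous linear map. -/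
private def σL : (ℝ × (Fin n → ℝ)) →L[ℝ] (ℝ × (Fin n → ℝ)) :=
  (-(ContinuousLinearMap.fst ℝ ℝ (Fin n → ℝ))).prod (ContinuousLinearMap.snd ℝ ℝ (Fin n → ℝ))

private lemma σL_apply (x : X) : σL (n := n) x = (-x.1, x.2) := rfl

/-- post-composition with a continuous linear map commutes with iterated derivatives -/
private lemma clm_iteratedDeriv {F : Type*} [NormedAddCommGroup F] [NormedSpace ℝ F]
    (T : E →L[ℝ] F) {u : ℝ → E} (hu : ContDiff ℝ (⊤ : ℕ∞) u) (k : ℕ) (t : ℝ) :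
    iteratedDeriv k (fun ρ => T (u ρ)) t = T (iteratedDeriv k u t) := by
  rw [iteratedDeriv_eq_iteratedFDeriv, iteratedDeriv_eq_iteratedFDeriv]
  have : (fun ρ => T (u ρ)) = T ∘ u := rfl
  rw [this, T.iteratedFDeriv_comp_left (hu.contDiffAt (x := t)) (natCast_le_top k)]
  rfl

private lemma iteratedDeriv_sub' {f g : ℝ → E} (hf : ContDiff ℝ (⊤ : ℕ∞) f)
    (hg : ContDiff ℝ (⊤ : ℕ∞) g) (k : ℕ) (t : ℝ) :
    iteratedDeriv k (fun ρ => f ρ - g ρ) t = iteratedDeriv k f t - iteratedDeriv k g t := by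
  rw [iteratedDeriv_eq_iteratedFDeriv, iteratedDeriv_eq_iteratedFDeriv,
    iteratedDeriv_eq_iteratedFDeriv]
  have hsub : (fun ρ => f ρ - g ρ) = f + -g := by
    funext ρ; simp [sub_eq_add_neg]
  have hgneg : ContDiff ℝ ((k : ℕ∞) : WithTop ℕ∞) (-g) := (hg.of_le (natCast_le_top k)).neg
  rw [hsub, iteratedFDeriv_add_apply (hf.of_le (natCast_le_top k)).contDiffAt hgneg.contDiffAt,
    iteratedFDeriv_neg_apply]
  simp [sub_eq_add_neg]

private lemma contDiff_line (s : Fin n → ℝ) :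
    ContDiff ℝ (⊤ : ℕ∞) (fun ρ : ℝ => ((ρ, s) : X)) :=
  contDiff_id.prodMk contDiff_const

/-- From the odd/even hypotheses, the reflected map and the reflection of the map
have the same full jets at every point of the hyperplane. -/
private lemma even_map_jet {φ : X → X} (hφ : ContDiff ℝ (⊤ : ℕ∞) φ)
    (hodd : OddInRho n fun p => (φ p).1)
    (heven : ∀ j : Fin n, EvenInRho n fun p => (φ p).2 j)
    (s : Fin n → ℝ) (m : ℕ) :
    iteratedFDeriv ℝ m (φ ∘ (σL (n := n))) ((0 : ℝ), s)
      = iteratedFDeriv ℝ m ((σL (n := n)) ∘ φ) ((0 : ℝ), s) := by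
  have hφσ : ContDiff ℝ (⊤ : ℕ∞) (φ ∘ (σL (n := n))) := hφ.comp (σL (n := n)).contDiff
  have hσφ : ContDiff ℝ (⊤ : ℕ∞) ((σL (n := n)) ∘ φ) := (σL (n := n)).contDiff.comp hφ
  set Δ : X → X := fun x => φ ((σL (n := n)) x) - (σL (n := n)) (φ x) with hΔ
  have hΔsm : ContDiff ℝ (⊤ : ℕ∞) Δ := hφσ.sub hσφ
  -- Δ is line-flat
  have hlineflat : ∀ (s' : Fin n → ℝ) (k : ℕ),
      iteratedDeriv k (fun ρ : ℝ => Δ (ρ, s')) 0 = 0 := by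
    intro s' k
    set u : ℝ → X := fun ρ => φ (ρ, s') with hu
    have husm : ContDiff ℝ (⊤ : ℕ∞) u := hφ.comp (contDiff_line s')
    have hrepr : (fun ρ : ℝ => Δ (ρ, s'))
        = fun ρ : ℝ => (fun ρ' => u (-ρ')) ρ - (fun ρ' => (σL (n := n)) (u ρ')) ρ := by
      funext ρ
      simp only [hΔ, hu, σL_apply]
    have hf' : ContDiff ℝ (⊤ : ℕ∞) fun ρ' : ℝ => u (-ρ') := husm.comp contDiff_neg
    have hg' : ContDiff ℝ (⊤ : ℕ∞) fun ρ' : ℝ => (σL (n := n)) (u ρ') :=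
      (σL (n := n)).contDiff.comp husm
    rw [hrepr, iteratedDeriv_sub' hf' hg']
    rw [iteratedDeriv_comp_neg, clm_iteratedDeriv _ husm, neg_zero]
    set a : X := iteratedDeriv k u 0 with ha
    have ha1 : Even k → a.1 = 0 := by
      intro hk
      have hcl := clm_iteratedDeriv (ContinuousLinearMap.fst ℝ ℝ (Fin n → ℝ)) husm k 0
      rw [← ha] at hcl
      exact (hcl.symm.trans (hodd s' k hk) : a.1 = 0)
    have ha2 : Odd k → a.2 = 0 := by
      intro hk
      funext j
      have hcl := clm_iteratedDeriv ((ContinuousLinearMap.proj j).comp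
        (ContinuousLinearMap.snd ℝ ℝ (Fin n → ℝ))) husm k 0
      rw [← ha] at hcl
      exact (hcl.symm.trans (heven j s' k hk) : a.2 j = 0)
    rcases Nat.even_or_odd k with hk | hk
    · rw [hk.neg_one_pow, one_smul, σL_apply, sub_eq_zero]
      have h1 := ha1 hk
      ext
      · simp [h1]
      · rfl
    · rw [hk.neg_one_pow, neg_one_smul, σL_apply, sub_eq_zero]
      have h2 := ha2 hk
      ext
      · rfl
      · simp [h2]
  -- convert to PFlat and conclude
  have hpflat : PFlat Δ := by
    intro s' k
    rw [← iteratedDeriv_line hΔsm]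
    exact hlineflat s' k
  have hzero := pflat_iteratedFDeriv hΔsm hpflat m s
  have hrepr : (φ ∘ (σL (n := n))) = Δ + (σL (n := n)) ∘ φ := by
    funext x; simp [hΔ]
  rw [hrepr, iteratedFDeriv_add_apply (hΔsm.of_le (natCast_le_top m)).contDiffAt
    (hσφ.of_le (natCast_le_top m)).contDiffAt, hzero, zero_add]

/-- Faà di Bruno for full jets. -/
private lemma iteratedFDeriv_comp_eq {g f : X → X} (hg : ContDiff ℝ (⊤ : ℕ∞) g)
    (hf : ContDiff ℝ (⊤ : ℕ∞) f) (x : X) (m : ℕ) :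
    iteratedFDeriv ℝ m (g ∘ f) x
      = (ftaylorSeries ℝ g (f x)).taylorComp (ftaylorSeries ℝ f x) m := by
  have Hg : HasFTaylorSeriesUpTo ((⊤ : ℕ∞) : WithTop ℕ∞) g (ftaylorSeries ℝ g) :=
    contDiff_iff_ftaylorSeries.mp hg
  have Hf : HasFTaylorSeriesUpTo ((⊤ : ℕ∞) : WithTop ℕ∞) f (ftaylorSeries ℝ f) :=
    contDiff_iff_ftaylorSeries.mp hf
  have Hgo : HasFTaylorSeriesUpToOn ((⊤ : ℕ∞) : WithTop ℕ∞) g (ftaylorSeries ℝ g) Set.univ :=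
    (hasFTaylorSeriesUpToOn_univ_iff).mpr Hg
  have Hfo : HasFTaylorSeriesUpToOn ((⊤ : ℕ∞) : WithTop ℕ∞) f (ftaylorSeries ℝ f) Set.univ :=
    (hasFTaylorSeriesUpToOn_univ_iff).mpr Hf
  have Hcomp := Hgo.comp Hfo (Set.mapsTo_univ f Set.univ)
  have Hcomp' := (hasFTaylorSeriesUpToOn_univ_iff).mp Hcomp
  exact (Hcomp'.eq_iteratedFDeriv (natCast_le_top m) x).symm

end StmtFourAux

/-- The composition of two smooth even maps of the half-space
(first component odd in ρ, remaining components even in ρ) is again an even map. -/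
theorem stmt_4 (n : ℕ) (hn : 1 ≤ n)
    (φ₁ φ₂ : ℝ × (Fin n → ℝ) → ℝ × (Fin n → ℝ))
    (h₁ : ContDiff ℝ (⊤ : ℕ∞) φ₁) (h₂ : ContDiff ℝ (⊤ : ℕ∞) φ₂)
    (h₁odd : OddInRho n fun p => (φ₁ p).1)
    (h₁even : ∀ j : Fin n, EvenInRho n fun p => (φ₁ p).2 j)
    (h₂odd : OddInRho n fun p => (φ₂ p).1)
    (h₂even : ∀ j : Fin n, EvenInRho n fun p => (φ₂ p).2 j) :
    OddInRho n (fun p => ((φ₂ ∘ φ₁) p).1) ∧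
      ∀ j : Fin n, EvenInRho n fun p => ((φ₂ ∘ φ₁) p).2 j := by
  -- jets of the composition commute with the reflection
  set Ψ : ℝ × (Fin n → ℝ) → ℝ × (Fin n → ℝ) := φ₂ ∘ φ₁ with hΨ
  have hΨsm : ContDiff ℝ (⊤ : ℕ∞) Ψ := h₂.comp h₁
  have keyjet : ∀ (s : Fin n → ℝ) (m : ℕ),
      iteratedFDeriv ℝ m (Ψ ∘ (σL (n := n))) ((0 : ℝ), s)
        = iteratedFDeriv ℝ m ((σL (n := n)) ∘ Ψ) ((0 : ℝ), s) := by
    intro s m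
    set p : ℝ × (Fin n → ℝ) := ((0 : ℝ), s) with hp
    have hσp : (σL (n := n)) p = p := by
      rw [σL_apply]; simp [hp]
    set q : ℝ × (Fin n → ℝ) := φ₁ p with hq
    have hq1 : q.1 = 0 := by
      have := h₁odd s 0 Even.zero
      rw [iteratedDeriv_zero] at this
      exact this
    have hσq : (σL (n := n)) q = q := by
      rw [σL_apply, hq1, neg_zero]; exact Prod.ext hq1.symm rfl
    have hqs : q = ((0 : ℝ), q.2) := Prod.ext hq1 rfl
    have hφ₁σ : ContDiff ℝ (⊤ : ℕ∞) (φ₁ ∘ (σL (n := n))) := h₁.comp (σL (n := n)).contDiff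
    have hσφ₁ : ContDiff ℝ (⊤ : ℕ∞) ((σL (n := n)) ∘ φ₁) := (σL (n := n)).contDiff.comp h₁
    have hφ₂σ : ContDiff ℝ (⊤ : ℕ∞) (φ₂ ∘ (σL (n := n))) := h₂.comp (σL (n := n)).contDiff
    have hσφ₂ : ContDiff ℝ (⊤ : ℕ∞) ((σL (n := n)) ∘ φ₂) := (σL (n := n)).contDiff.comp h₂
    -- full jet equality of φ₁∘σ and σ∘φ₁ at p:
    have jet₁ : ftaylorSeries ℝ (φ₁ ∘ (σL (n := n))) p = ftaylorSeries ℝ ((σL (n := n)) ∘ φ₁) p := by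
      funext k
      exact even_map_jet h₁ h₁odd h₁even s k
    have jet₂ : ftaylorSeries ℝ (φ₂ ∘ (σL (n := n))) q = ftaylorSeries ℝ ((σL (n := n)) ∘ φ₂) q := by
      funext k
      rw [hqs]
      exact even_map_jet h₂ h₂odd h₂even q.2 k
    have hval₁ : (φ₁ ∘ (σL (n := n))) p = q := by
      rw [Function.comp_apply, hσp]
    have hval₂ : ((σL (n := n)) ∘ φ₁) p = q := by
      rw [Function.comp_apply, ← hq]; exact hσq
    calc iteratedFDeriv ℝ m (Ψ ∘ (σL (n := n))) p
        = iteratedFDeriv ℝ m (φ₂ ∘ (φ₁ ∘ (σL (n := n)))) p := rfl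
      _ = (ftaylorSeries ℝ φ₂ ((φ₁ ∘ (σL (n := n))) p)).taylorComp
            (ftaylorSeries ℝ (φ₁ ∘ (σL (n := n))) p) m := iteratedFDeriv_comp_eq h₂ hφ₁σ p m
      _ = (ftaylorSeries ℝ φ₂ (((σL (n := n)) ∘ φ₁) p)).taylorComp
            (ftaylorSeries ℝ ((σL (n := n)) ∘ φ₁) p) m := by rw [hval₁, hval₂, jet₁]
      _ = iteratedFDeriv ℝ m (φ₂ ∘ ((σL (n := n)) ∘ φ₁)) p :=
          (iteratedFDeriv_comp_eq h₂ hσφ₁ p m).symm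
      _ = iteratedFDeriv ℝ m ((φ₂ ∘ (σL (n := n))) ∘ φ₁) p := rfl
      _ = (ftaylorSeries ℝ (φ₂ ∘ (σL (n := n))) (φ₁ p)).taylorComp
            (ftaylorSeries ℝ φ₁ p) m := iteratedFDeriv_comp_eq hφ₂σ h₁ p m
      _ = (ftaylorSeries ℝ ((σL (n := n)) ∘ φ₂) (φ₁ p)).taylorComp
            (ftaylorSeries ℝ φ₁ p) m := by rw [← hq, jet₂]
      _ = iteratedFDeriv ℝ m (((σL (n := n)) ∘ φ₂) ∘ φ₁) p :=
          (iteratedFDeriv_comp_eq hσφ₂ h₁ p m).symm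
      _ = iteratedFDeriv ℝ m ((σL (n := n)) ∘ Ψ) p := rfl
  -- restrict the jet equality to horizontal lines
  have keyline : ∀ (s : Fin n → ℝ) (m : ℕ),
      ((-1 : ℝ) ^ m) • iteratedDeriv m (fun ρ : ℝ => Ψ (ρ, s)) 0
        = (σL (n := n)) (iteratedDeriv m (fun ρ : ℝ => Ψ (ρ, s)) 0) := by
    intro s m
    have hΨσ : ContDiff ℝ (⊤ : ℕ∞) (Ψ ∘ (σL (n := n))) := hΨsm.comp (σL (n := n)).contDiff
    have hσΨ : ContDiff ℝ (⊤ : ℕ∞) ((σL (n := n)) ∘ Ψ) := (σL (n := n)).contDiff.comp hΨsm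
    have husm : ContDiff ℝ (⊤ : ℕ∞) (fun ρ : ℝ => Ψ (ρ, s)) := hΨsm.comp (contDiff_line s)
    have h1 : iteratedDeriv m (fun ρ : ℝ => (Ψ ∘ (σL (n := n))) (ρ, s)) 0
        = iteratedDeriv m (fun ρ : ℝ => ((σL (n := n)) ∘ Ψ) (ρ, s)) 0 := by
      rw [iteratedDeriv_line hΨσ, iteratedDeriv_line hσΨ,
        ← iteratedFDeriv_pd_iterate hΨσ, ← iteratedFDeriv_pd_iterate hσΨ, keyjet s m]
    have h2 : (fun ρ : ℝ => (Ψ ∘ (σL (n := n))) (ρ, s))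
        = fun ρ : ℝ => (fun ρ' : ℝ => Ψ (ρ', s)) (-ρ) := by
      funext ρ; simp [σL_apply]
    have h3 : iteratedDeriv m (fun ρ : ℝ => (Ψ ∘ (σL (n := n))) (ρ, s)) 0
        = ((-1 : ℝ) ^ m) • iteratedDeriv m (fun ρ : ℝ => Ψ (ρ, s)) 0 := by
      have hcn := iteratedDeriv_comp_neg m (fun ρ' : ℝ => Ψ (ρ', s)) (0 : ℝ)
      rw [neg_zero] at hcn
      rw [h2]
      exact hcn
    have h4 : iteratedDeriv m (fun ρ : ℝ => ((σL (n := n)) ∘ Ψ) (ρ, s)) 0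
        = (σL (n := n)) (iteratedDeriv m (fun ρ : ℝ => Ψ (ρ, s)) 0) :=
      clm_iteratedDeriv _ husm m 0
    rw [← h3, ← h4, h1]
  constructor
  · intro s m hm
    have := keyline s m
    set a := iteratedDeriv m (fun ρ : ℝ => Ψ (ρ, s)) 0 with ha
    rw [hm.neg_one_pow, one_smul, σL_apply] at this
    have ha1 : a.1 = -a.1 := congrArg Prod.fst this
    have ha1' : a.1 = 0 := by linarith [ha1]
    have husm : ContDiff ℝ (⊤ : ℕ∞) (fun ρ : ℝ => Ψ (ρ, s)) := hΨsm.comp (contDiff_line s)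
    have hcomp := clm_iteratedDeriv (ContinuousLinearMap.fst ℝ ℝ (Fin n → ℝ)) husm m 0
    rw [← ha] at hcomp
    exact hcomp.trans ha1'
  · intro j s m hm
    have := keyline s m
    set a := iteratedDeriv m (fun ρ : ℝ => Ψ (ρ, s)) 0 with ha
    rw [hm.neg_one_pow, neg_one_smul, σL_apply] at this
    have ha2 : -a.2 = a.2 := congrArg Prod.snd this
    have ha2' : a.2 j = 0 := by
      have := congrFun ha2 j
      simp only [Pi.neg_apply] at this
      linarith
    have husm : ContDiff ℝ (⊤ : ℕ∞) (fun ρ : ℝ => Ψ (ρ, s)) := hΨsm.comp (contDiff_line s)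
    have hcomp := clm_iteratedDeriv ((ContinuousLinearMap.proj j).comp
      (ContinuousLinearMap.snd ℝ ℝ (Fin n → ℝ))) husm m 0
    rw [← ha] at hcomp
    exact hcomp.trans ha2'
end

section
/- Let n ≥ 1, let b : ℝ × ℝⁿ → ℝ and c : ℝ × ℝⁿ → ℝⁿ be smooth, and suppose b(0,s) > 0 for all s ∈ ℝⁿ. Then on the open set Ω = {(ρ,s) ∈ ℝ × ℝⁿ : b(ρ²,s) > 0} the map φ(ρ,s) = (ρ·√(b(ρ², s)), c(ρ², s)) is smooth; moreover its first component is odd in ρ and every component of its ℝⁿ-valued part is even in ρ. -/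
lemma odd_iteratedDeriv_zero {f : ℝ → ℝ} (hf : ∀ x, f (-x) = -f x) {m : ℕ}
    (hm : Even m) : iteratedDeriv m f 0 = 0 := by
  have h := iteratedDeriv_comp_neg m f 0
  rw [funext hf, iteratedDeriv_fun_neg, neg_zero, hm.neg_one_pow, one_smul] at h
  linarith [h]

lemma even_iteratedDeriv_zero {f : ℝ → ℝ} (hf : ∀ x, f (-x) = f x) {m : ℕ}
    (hm : Odd m) : iteratedDeriv m f 0 = 0 := by
  have h := iteratedDeriv_comp_neg m f 0
  rw [funext hf, neg_zero, hm.neg_one_pow] at h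
  simp only [neg_smul, one_smul] at h
  linarith [h]

/-- For smooth `b, c` with `b(0,s) > 0` for all `s`, the set
`Ω = {(ρ,s) : b(ρ²,s) > 0}` is open, the map
`φ(ρ,s) = (ρ·√(b(ρ²,s)), c(ρ²,s))` is smooth on `Ω`, its first component is odd
in ρ, and every component of its `ℝⁿ`-valued part is even in ρ. -/
theorem stmt_6 (n : ℕ) (hn : 1 ≤ n)
    (b : ℝ × (Fin n → ℝ) → ℝ) (c : ℝ × (Fin n → ℝ) → Fin n → ℝ)
    (hb : ContDiff ℝ (⊤ : ℕ∞) b) (hc : ContDiff ℝ (⊤ : ℕ∞) c)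
    (hbpos : ∀ s : Fin n → ℝ, 0 < b (0, s)) :
    IsOpen {p : ℝ × (Fin n → ℝ) | 0 < b (p.1 ^ 2, p.2)} ∧
    ContDiffOn ℝ (⊤ : ℕ∞)
      (fun p : ℝ × (Fin n → ℝ) =>
        ((p.1 * Real.sqrt (b (p.1 ^ 2, p.2)), c (p.1 ^ 2, p.2)) : ℝ × (Fin n → ℝ)))
      {p : ℝ × (Fin n → ℝ) | 0 < b (p.1 ^ 2, p.2)} ∧
    OddInRho n (fun p => p.1 * Real.sqrt (b (p.1 ^ 2, p.2))) ∧
    ∀ j : Fin n, EvenInRho n fun p => c (p.1 ^ 2, p.2) j := by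
  have hsq : ContDiff ℝ (⊤ : ℕ∞) (fun p : ℝ × (Fin n → ℝ) => ((p.1 ^ 2, p.2) : ℝ × (Fin n → ℝ))) :=
    ContDiff.prodMk (contDiff_fst.pow 2) contDiff_snd
  have hbsq : ContDiff ℝ (⊤ : ℕ∞) (fun p : ℝ × (Fin n → ℝ) => b (p.1 ^ 2, p.2)) := hb.comp hsq
  refine ⟨isOpen_lt continuous_const hbsq.continuous, ?_, ?_, ?_⟩
  · refine ContDiffOn.prodMk ?_ ((hc.comp hsq).contDiffOn)
    exact contDiff_fst.contDiffOn.mul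
      (hbsq.contDiffOn.sqrt fun p hp => ne_of_gt hp)
  · intro s m hm
    refine odd_iteratedDeriv_zero (fun x => ?_) hm
    simp [neg_pow]
  · intro j s m hm
    refine even_iteratedDeriv_zero (fun x => ?_) hm
    simp [neg_pow]
end

section
/- Let n ≥ 1, let Ω ⊆ ℝ^{1+n} be an open set containing a point z₀ with z₀⁰ = 0, and let Γ̂ᵏᵢⱼ : Ω → ℝ (0 ≤ i,j,k ≤ n) be continuous functions, symmetric in (i,j), such that Γ̂⁰₀₀ ≡ 0, Γ̂⁰₀β = Γ̂⁰_{β0} ≡ 0 for all 1 ≤ β ≤ n, and such that there is a continuous symmetric positive definite matrix-valued function k_{αβ} with Γ̂⁰_{αβ}(z) = 2 k_{αβ}(z) for all z with z⁰ = 0. Let γ : (−ε, ε) → Ω be a Γ̂-geodesic with γ⁰(0) = 0, (γ⁰)′(0) = 0, and γ′(0) ≠ 0. Then (γ⁰)″(0) < 0. -/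
/-- (Strict convexity of the boundary.) If `Γ̂` is a continuous
symmetric connection on an open set `Ω ⊆ ℝ^{1+n}` with `Γ̂⁰₀₀ ≡ 0`, `Γ̂⁰₀β ≡ 0`,
and `Γ̂⁰_{αβ} = 2k_{αβ}` on `{z⁰ = 0}` for a continuous symmetric positive definite
`k`, then any `Γ̂`-geodesic tangent to `{z⁰ = 0}` at `t = 0` with nonzero velocity
satisfies `(γ⁰)″(0) < 0`. -/
theorem stmt_9 (n : ℕ) (hn : 1 ≤ n)
    (Ω : Set (Fin (n + 1) → ℝ)) (hΩ : IsOpen Ω)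
    (z₀ : Fin (n + 1) → ℝ) (hz₀ : z₀ ∈ Ω) (hz₀0 : z₀ 0 = 0)
    (Γ : (Fin (n + 1) → ℝ) → Fin (n + 1) → Fin (n + 1) → Fin (n + 1) → ℝ)
    (hcont : ∀ a i j : Fin (n + 1), ContinuousOn (fun z => Γ z a i j) Ω)
    (hsym : ∀ z, ∀ a i j : Fin (n + 1), Γ z a i j = Γ z a j i)
    (h000 : ∀ z ∈ Ω, Γ z 0 0 0 = 0)
    (h00β : ∀ z ∈ Ω, ∀ β : Fin n, Γ z 0 0 β.succ = 0 ∧ Γ z 0 β.succ 0 = 0)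
    (kmat : (Fin (n + 1) → ℝ) → Matrix (Fin n) (Fin n) ℝ)
    (hkcont : ∀ α β : Fin n, ContinuousOn (fun z => kmat z α β) Ω)
    (hksym : ∀ z ∈ Ω, (kmat z).IsSymm)
    (hkpos : ∀ z ∈ Ω, (kmat z).PosDef)
    (hbdry : ∀ z ∈ Ω, z 0 = 0 →
      ∀ α β : Fin n, Γ z 0 α.succ β.succ = 2 * kmat z α β)
    (ε : ℝ) (hε : 0 < ε) (γ : ℝ → Fin (n + 1) → ℝ)
    (hγΩ : ∀ t ∈ Set.Ioo (-ε) ε, γ t ∈ Ω)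
    (hγC2 : ContDiffOn ℝ 2 γ (Set.Ioo (-ε) ε))
    (hgeo : ∀ t ∈ Set.Ioo (-ε) ε, ∀ a : Fin (n + 1),
      deriv (deriv fun t' => γ t' a) t =
        -∑ i : Fin (n + 1), ∑ j : Fin (n + 1),
          Γ (γ t) a i j * deriv (fun t' => γ t' i) t * deriv (fun t' => γ t' j) t)
    (hstart : γ 0 0 = 0)
    (htangent : deriv (fun t => γ t 0) 0 = 0)
    (hvel : deriv γ 0 ≠ 0) :
    deriv (deriv fun t => γ t 0) 0 < 0 := by

  have h0 : (0:ℝ) ∈ Set.Ioo (-ε) ε := ⟨by linarith, hε⟩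
  have hzΩ : γ 0 ∈ Ω := hγΩ 0 h0
  have hnb : Set.Ioo (-ε) ε ∈ nhds (0:ℝ) := isOpen_Ioo.mem_nhds h0
  have hdiff : DifferentiableAt ℝ γ 0 :=
    (hγC2.contDiffAt hnb).differentiableAt (by norm_num)
  have hcoord : ∀ i, deriv (fun t => γ t i) 0 = deriv γ 0 i := by
    intro i
    exact ((hasDerivAt_pi.mp hdiff.hasDerivAt) i).deriv
  set v : Fin n → ℝ := fun α => deriv (fun t => γ t α.succ) 0 with hvdef
  have hv0 : v ≠ 0 := by
    intro h
    apply hvel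
    funext i
    refine Fin.cases ?_ ?_ i
    · rw [← hcoord 0]; exact htangent
    · intro α
      rw [← hcoord α.succ]
      exact congrFun h α
  have hpos := (hkpos (γ 0) hzΩ).dotProduct_mulVec_pos hv0
  have hpos' : 0 < ∑ α : Fin n, ∑ β : Fin n, kmat (γ 0) α β * v α * v β := by
    have heq : dotProduct (star v) ((kmat (γ 0)).mulVec v)
        = ∑ α : Fin n, ∑ β : Fin n, kmat (γ 0) α β * v α * v β := by
      simp only [dotProduct, Matrix.mulVec, Pi.star_apply, star_trivial,
        Finset.mul_sum]
      exact Finset.sum_congr rfl fun α _ => Finset.sum_congr rfl fun β _ => by ring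
    rw [← heq]
    exact hpos
  rw [hgeo 0 h0 0]
  have hsum : ∑ i : Fin (n+1), ∑ j : Fin (n+1),
      Γ (γ 0) 0 i j * deriv (fun t' => γ t' i) 0 * deriv (fun t' => γ t' j) 0
      = 2 * ∑ α : Fin n, ∑ β : Fin n, kmat (γ 0) α β * v α * v β := by
    rw [Fin.sum_univ_succ]
    have hz : deriv (fun t' => γ t' (0 : Fin (n+1))) 0 = 0 := htangent
    simp only [hz, mul_zero, zero_mul, Finset.sum_const_zero, zero_add]
    rw [Finset.mul_sum]
    refine Finset.sum_congr rfl fun α _ => ?_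
    rw [Fin.sum_univ_succ]
    simp only [hz, mul_zero, zero_add, Finset.mul_sum]
    refine Finset.sum_congr rfl fun β _ => ?_
    rw [hbdry (γ 0) hzΩ hstart α β]
    ring
  rw [hsum]
  linarith
end

section
/- Let m ≥ 1, let Ω ⊆ ℝ^m be open and convex, and let E : Ω × Ω → ℝ^m be of class C² with E(z,z) = 0 for all z ∈ Ω and with the differential of E(z,·) at z equal to the identity for every z ∈ Ω. Then there exists a continuously differentiable map G : Ω × Ω → ℝ^{m×m} taking values in symmetric positive semidefinite matrices such that |E(z, z̃)|² = ⟨G(z, z̃)(z̃ − z), z̃ − z⟩ for all z, z̃ ∈ Ω, G(z,z) is the identity matrix for every z, and for every z₀ ∈ Ω there is a neighborhood of (z₀, z₀) in Ω × Ω on which G(z, z̃) is positive definite. -/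
set_option maxHeartbeats 1000000

open Set Metric MeasureTheory intervalIntegral Matrix


noncomputable def Tm (m : ℕ) (t : ℝ) :
    ((Fin m → ℝ) × (Fin m → ℝ)) →L[ℝ] ((Fin m → ℝ) × (Fin m → ℝ)) :=
  (ContinuousLinearMap.fst ℝ _ _).prod
    ((ContinuousLinearMap.fst ℝ _ _) +
      t • ((ContinuousLinearMap.snd ℝ _ _) - (ContinuousLinearMap.fst ℝ _ _)))

lemma Tm_apply (m : ℕ) (t : ℝ) (p : (Fin m → ℝ) × (Fin m → ℝ)) :
    Tm m t p = (p.1, p.1 + t • (p.2 - p.1)) := rfl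

lemma Tm_norm_le (m : ℕ) {t : ℝ} (ht : t ∈ Set.Icc (0:ℝ) 1) : ‖Tm m t‖ ≤ 1 := by
  apply ContinuousLinearMap.opNorm_le_bound _ zero_le_one
  intro p
  rw [one_mul, Tm_apply, Prod.norm_def, Prod.norm_def]
  have h2 : p.1 + t • (p.2 - p.1) = (1 - t) • p.1 + t • p.2 := by
    simp [sub_smul, smul_sub]; abel
  apply max_le (le_max_left _ _)
  rw [h2]
  calc ‖(1-t) • p.1 + t • p.2‖ ≤ ‖(1-t) • p.1‖ + ‖t • p.2‖ := norm_add_le _ _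
    _ = (1-t) * ‖p.1‖ + t * ‖p.2‖ := by
        rw [norm_smul, norm_smul, Real.norm_eq_abs, Real.norm_eq_abs,
          abs_of_nonneg (by linarith [ht.2]), abs_of_nonneg ht.1]
    _ ≤ (1-t) * max ‖p.1‖ ‖p.2‖ + t * max ‖p.1‖ ‖p.2‖ := by
        gcongr
        · linarith [ht.2]
        · exact le_max_left _ _
        · exact ht.1
        · exact le_max_right _ _
    _ = max ‖p.1‖ ‖p.2‖ := by ring

lemma Tm_lipschitz (m : ℕ) : LipschitzWith 2 (fun t : ℝ => Tm m t) := by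
  apply LipschitzWith.of_dist_le_mul
  intro t s
  rw [dist_eq_norm, dist_eq_norm]
  apply ContinuousLinearMap.opNorm_le_bound _ (by positivity)
  intro p
  have : (Tm m t - Tm m s) p = ((0 : Fin m → ℝ), (t - s) • (p.2 - p.1)) := by
    simp [Tm_apply, sub_smul]
  rw [this, Prod.norm_def]
  simp only [norm_zero, norm_smul, Real.norm_eq_abs]
  rw [max_eq_right (by positivity)]
  calc |t - s| * ‖p.2 - p.1‖ ≤ |t - s| * (‖p.2‖ + ‖p.1‖) := by
        gcongr; exact norm_sub_le _ _
    _ ≤ |t - s| * (max ‖p.1‖ ‖p.2‖ + max ‖p.1‖ ‖p.2‖) := by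
        gcongr
        · exact le_max_right _ _
        · exact le_max_left _ _
    _ = 2 * ‖t - s‖ * ‖p‖ := by rw [Prod.norm_def, Real.norm_eq_abs]; ring

lemma Tm_cont (m : ℕ) : Continuous (fun t : ℝ => Tm m t) := (Tm_lipschitz m).continuous

lemma Tm_joint_cont (m : ℕ) :
    Continuous (fun q : ((Fin m → ℝ) × (Fin m → ℝ)) × ℝ => Tm m q.2 q.1) := by
  simp only [Tm_apply]
  fun_prop

-- clamp
noncomputable def clmp (t : ℝ) : ℝ := min 1 (max 0 t)
lemma clmp_mem (t : ℝ) : clmp t ∈ Set.Icc (0:ℝ) 1 :=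
  ⟨le_min zero_le_one (le_max_left _ _), min_le_left _ _⟩
lemma clmp_of_mem {t : ℝ} (ht : t ∈ Set.Icc (0:ℝ) 1) : clmp t = t := by
  rw [clmp, max_eq_right ht.1, min_eq_right ht.2]
lemma clmp_cont : Continuous clmp := by unfold clmp; fun_prop

section key
variable {m : ℕ} {U : Set ((Fin m → ℝ) × (Fin m → ℝ))}

/-- tube: for `p₀ ∈ U` there is `r>0` s.t. the whole segment-trajectory of the closed
ball stays in `U`. -/
lemma tube (hU : IsOpen U)
    (hσ : ∀ p ∈ U, ∀ t ∈ Set.Icc (0:ℝ) 1, Tm m t p ∈ U)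
    {p₀ : (Fin m → ℝ) × (Fin m → ℝ)} (hp₀ : p₀ ∈ U) :
    ∃ r > 0, closedBall p₀ r ⊆ U ∧
      ∀ p ∈ closedBall p₀ r, ∀ t ∈ Set.Icc (0:ℝ) 1, Tm m t p ∈ U := by
  have hc : Continuous (fun q : ((Fin m → ℝ) × (Fin m → ℝ)) × ℝ => Tm m q.2 q.1) :=
    Tm_joint_cont m
  have hsub : ({p₀} : Set _) ×ˢ Set.Icc (0:ℝ) 1 ⊆
      (fun q : ((Fin m → ℝ) × (Fin m → ℝ)) × ℝ => Tm m q.2 q.1) ⁻¹' U := by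
    rintro ⟨p, t⟩ ⟨hp, ht⟩
    simp only [Set.mem_singleton_iff] at hp
    subst hp
    exact hσ _ hp₀ _ ht
  obtain ⟨u, v, hu, hv, hpu, hIv, huv⟩ :=
    generalized_tube_lemma isCompact_singleton isCompact_Icc
      (hU.preimage hc) hsub
  have hu' : u ∩ U ∈ nhds p₀ := (hu.inter hU).mem_nhds ⟨hpu rfl, hp₀⟩
  obtain ⟨r, hr, hball⟩ := Metric.nhds_basis_closedBall.mem_iff.1 hu'
  refine ⟨r, hr, fun p hp => (hball hp).2, fun p hp t ht => ?_⟩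
  exact huv (Set.mk_mem_prod (hball hp).1 (hIv ht))

lemma keyC1 (hU : IsOpen U)
    (hσ : ∀ p ∈ U, ∀ t ∈ Set.Icc (0:ℝ) 1, Tm m t p ∈ U)
    {ψ : ((Fin m → ℝ) × (Fin m → ℝ)) → ℝ} (hψ : ContDiffOn ℝ 1 ψ U) :
    ContDiffOn ℝ 1 (fun p => ∫ t in (0:ℝ)..1, ψ (Tm m t p)) U := by
  set D := fderiv ℝ ψ with hD
  have hDc : ContinuousOn D U := hψ.continuousOn_fderiv_of_isOpen hU le_rfl
  have hdiff : ∀ q ∈ U, HasFDerivAt ψ (D q) q := fun q hq =>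
    (((hψ.differentiableOn one_ne_zero).differentiableAt (hU.mem_nhds hq))).hasFDerivAt
  set F' : ((Fin m → ℝ) × (Fin m → ℝ)) → ℝ →
      (((Fin m → ℝ) × (Fin m → ℝ)) →L[ℝ] ℝ) :=
    fun p t => (D (Tm m t p)).comp (Tm m t) with hF'
  -- the main derivative claim
  have main : ∀ p₀ ∈ U,
      HasFDerivAt (fun p => ∫ t in (0:ℝ)..1, ψ (Tm m t p))
        (∫ t in (0:ℝ)..1, F' p₀ t) p₀ := by
    intro p₀ hp₀
    obtain ⟨r, hr, hball, htube⟩ := tube hU hσ hp₀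
    -- compact set of trajectory points
    have hKcomp : IsCompact ((fun q : ((Fin m → ℝ) × (Fin m → ℝ)) × ℝ => Tm m q.2 q.1) ''
        (closedBall p₀ r ×ˢ Set.Icc (0:ℝ) 1)) :=
      ((isCompact_closedBall _ _).prod isCompact_Icc).image (Tm_joint_cont m)
    have hKU : ((fun q : ((Fin m → ℝ) × (Fin m → ℝ)) × ℝ => Tm m q.2 q.1) ''
        (closedBall p₀ r ×ˢ Set.Icc (0:ℝ) 1)) ⊆ U := by
      rintro _ ⟨⟨p, t⟩, ⟨hp, ht⟩, rfl⟩
      exact htube p hp t ht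
    obtain ⟨C, hC⟩ := hKcomp.exists_bound_of_continuousOn (hDc.mono hKU)
    have hmem : ∀ p ∈ closedBall p₀ r, ∀ t ∈ Set.Icc (0:ℝ) 1, Tm m t p ∈ U := htube
    -- continuity in t of integrands
    have hcont1 : ∀ p ∈ closedBall p₀ r,
        ContinuousOn (fun t => ψ (Tm m t p)) (Set.Icc (0:ℝ) 1) := by
      intro p hp
      apply (hψ.continuousOn).comp
      · exact ((Tm_cont m).clm_apply continuous_const).continuousOn
      · intro t ht; exact hmem p hp t ht
    have hcont2 : ∀ p ∈ closedBall p₀ r,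
        ContinuousOn (fun t => F' p t) (Set.Icc (0:ℝ) 1) := by
      intro p hp
      apply ContinuousOn.clm_comp
      · apply hDc.comp (((Tm_cont m).clm_apply continuous_const).continuousOn)
        intro t ht; exact hmem p hp t ht
      · exact (Tm_cont m).continuousOn
    have hI : Set.uIcc (0:ℝ) 1 = Set.Icc (0:ℝ) 1 := Set.uIcc_of_le zero_le_one
    have hIoc : Set.uIoc (0:ℝ) 1 ⊆ Set.Icc (0:ℝ) 1 :=
      Set.uIoc_subset_uIcc.trans (le_of_eq hI)
    have hmem0 : p₀ ∈ closedBall p₀ r := mem_closedBall_self hr.le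
    apply intervalIntegral.hasFDerivAt_integral_of_dominated_of_fderiv_le
      (s := ball p₀ r) (bound := fun _ => |C| * 1) (Metric.ball_mem_nhds p₀ hr)
    · filter_upwards [Metric.closedBall_mem_nhds p₀ hr] with p hp
      exact ((hcont1 p hp).mono hIoc).aestronglyMeasurable measurableSet_uIoc
    · exact (hI ▸ hcont1 p₀ hmem0).intervalIntegrable
    · exact ((hcont2 p₀ hmem0).mono hIoc).aestronglyMeasurable measurableSet_uIoc
    · apply Filter.Eventually.of_forall
      intro t ht p hp
      have hp' : p ∈ closedBall p₀ r := ball_subset_closedBall hp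
      have ht' : t ∈ Set.Icc (0:ℝ) 1 := hIoc ht
      calc ‖F' p t‖ ≤ ‖D (Tm m t p)‖ * ‖Tm m t‖ := ContinuousLinearMap.opNorm_comp_le _ _
        _ ≤ |C| * 1 := by
            apply mul_le_mul _ (Tm_norm_le m ht') (norm_nonneg _) (abs_nonneg _)
            exact le_trans (hC _ ⟨(p, t), ⟨hp', ht'⟩, rfl⟩) (le_abs_self _)
    · exact intervalIntegrable_const
    · apply Filter.Eventually.of_forall
      intro t ht p hp
      have hp' : p ∈ closedBall p₀ r := ball_subset_closedBall hp
      have ht' : t ∈ Set.Icc (0:ℝ) 1 := hIoc ht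
      exact (hdiff _ (hmem p hp' t ht')).comp p (Tm m t).hasFDerivAt
  -- continuity of the derivative
  have hLcont : ContinuousOn (fun p => ∫ t in (0:ℝ)..1, F' p t) U := by
    intro p₀ hp₀
    obtain ⟨r, hr, hball, htube⟩ := tube hU hσ hp₀
    -- clamped version, continuous on the closed ball
    have heq : ∀ p, (∫ t in (0:ℝ)..1, F' p (clmp t)) = ∫ t in (0:ℝ)..1, F' p t := by
      intro p
      apply intervalIntegral.integral_congr
      intro t ht
      show F' p (clmp t) = F' p t
      rw [clmp_of_mem (by rwa [Set.uIcc_of_le zero_le_one] at ht)]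
    have hcont : ContinuousOn (fun p => ∫ t in (0:ℝ)..1, F' p (clmp t))
        (closedBall p₀ r) := by
      rw [continuousOn_iff_continuous_restrict]
      apply intervalIntegral.continuous_parametric_intervalIntegral_of_continuous'
        (f := fun (y : closedBall p₀ r) (s : ℝ) => F' y.1 (clmp s)) (μ := volume)
      -- joint continuity
      have h1 : Continuous (fun q : (closedBall p₀ r) × ℝ => Tm m (clmp q.2) q.1.1) := by
        have := (Tm_joint_cont m).comp (show Continuous
          (fun q : (closedBall p₀ r) × ℝ =>
            ((q.1.1, clmp q.2) : ((Fin m → ℝ) × (Fin m → ℝ)) × ℝ)) by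
          exact (continuous_subtype_val.comp continuous_fst).prodMk
            (clmp_cont.comp continuous_snd))
        exact this
      have h2 : ∀ q : (closedBall p₀ r) × ℝ, Tm m (clmp q.2) q.1.1 ∈ U :=
        fun q => htube _ q.1.2 _ (clmp_mem q.2)
      have h3 : Continuous (fun q : (closedBall p₀ r) × ℝ => D (Tm m (clmp q.2) q.1.1)) := by
        have := hDc.comp_continuous h1 h2
        exact this
      exact h3.clm_comp ((Tm_cont m).comp (clmp_cont.comp continuous_snd))
    have : ContinuousOn (fun p => ∫ t in (0:ℝ)..1, F' p t) (closedBall p₀ r) := by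
      apply hcont.congr; intro p _; exact (heq p).symm
    exact (this.continuousAt (Metric.closedBall_mem_nhds p₀ hr)).continuousWithinAt
  -- assemble
  have h1 : (1 : WithTop ℕ∞) = 0 + 1 := by norm_num
  rw [h1, contDiffOn_succ_iff_fderiv_of_isOpen hU]
  refine ⟨fun p hp => ((main p hp).differentiableAt).differentiableWithinAt, by simp, ?_⟩
  rw [contDiffOn_zero]
  apply hLcont.congr
  intro p hp
  exact (main p hp).fderiv

end key

/-- If `E : Ω × Ω → ℝ^m` is `C²` on a convex open `Ω`, vanishes on
the diagonal, and has differential in the second variable equal to the identity on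
the diagonal, then `|E(z,z̃)|² = ⟨G(z,z̃)(z̃−z), z̃−z⟩` for a `C¹` symmetric positive
semidefinite matrix-valued `G` with `G(z,z) = Id`, positive definite near the
diagonal. -/
theorem stmt_13 (m : ℕ) (hm : 1 ≤ m)
    (Ω : Set (Fin m → ℝ)) (hΩo : IsOpen Ω) (hΩc : Convex ℝ Ω)
    (E : (Fin m → ℝ) → (Fin m → ℝ) → Fin m → ℝ)
    (hE : ContDiffOn ℝ 2 (fun p : (Fin m → ℝ) × (Fin m → ℝ) => E p.1 p.2) (Ω ×ˢ Ω))
    (hE0 : ∀ z ∈ Ω, E z z = 0)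
    (hEid : ∀ z ∈ Ω, fderiv ℝ (fun w => E z w) z = ContinuousLinearMap.id ℝ (Fin m → ℝ)) :
    ∃ G : (Fin m → ℝ) → (Fin m → ℝ) → Matrix (Fin m) (Fin m) ℝ,
      (∀ i j : Fin m,
        ContDiffOn ℝ 1 (fun p : (Fin m → ℝ) × (Fin m → ℝ) => G p.1 p.2 i j) (Ω ×ˢ Ω)) ∧
      (∀ z ∈ Ω, ∀ z' ∈ Ω, (G z z').IsSymm ∧ (G z z').PosSemidef) ∧
      (∀ z ∈ Ω, ∀ z' ∈ Ω,
        ∑ i : Fin m, (E z z' i) ^ 2 =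
          ∑ i : Fin m, ∑ j : Fin m, G z z' i j * (z' - z) j * (z' - z) i) ∧
      (∀ z ∈ Ω, G z z = 1) ∧
      (∀ z₀ ∈ Ω, ∃ V ∈ nhds ((z₀, z₀) : (Fin m → ℝ) × (Fin m → ℝ)),
        ∀ p ∈ V ∩ Ω ×ˢ Ω, (G p.1 p.2).PosDef) := by
  classical
  set U : Set ((Fin m → ℝ) × (Fin m → ℝ)) := Ω ×ˢ Ω with hUdef
  have hU : IsOpen U := hΩo.prod hΩo
  have hσ : ∀ p ∈ U, ∀ t ∈ Set.Icc (0:ℝ) 1, Tm m t p ∈ U := by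
    rintro ⟨z, z'⟩ ⟨hz, hz'⟩ t ht
    rw [Tm_apply]
    refine ⟨hz, ?_⟩
    have : (z : Fin m → ℝ) + t • (z' - z) = (1 - t) • z + t • z' := by
      rw [smul_sub, sub_smul, one_smul]; abel
    rw [this]
    exact hΩc hz hz' (by linarith [ht.2]) ht.1 (by ring)
  set Fe : ((Fin m → ℝ) × (Fin m → ℝ)) → (Fin m → ℝ) := fun p => E p.1 p.2 with hFe
  set DF := fderiv ℝ Fe with hDFdef
  have hDF1 : ContDiffOn ℝ 1 DF U := hE.fderiv_of_isOpen hU (by norm_num)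
  have hDFc : ContinuousOn DF U := hDF1.continuousOn
  have hFdiff : ∀ q ∈ U, HasFDerivAt Fe (DF q) q := fun q hq =>
    ((hE.differentiableOn (by norm_num)).differentiableAt (hU.mem_nhds hq)).hasFDerivAt
  set ψ : Fin m → Fin m → ((Fin m → ℝ) × (Fin m → ℝ)) → ℝ :=
    fun i j q => DF q ((0 : Fin m → ℝ), Pi.single j 1) i with hψdef
  have hψ : ∀ i j, ContDiffOn ℝ 1 (ψ i j) U := by
    intro i j
    have e1 : ContDiff ℝ 1 (fun L : ((Fin m → ℝ) × (Fin m → ℝ)) →L[ℝ] (Fin m → ℝ) =>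
        L ((0 : Fin m → ℝ), Pi.single j 1)) :=
      by fun_prop
    have e2 : ContDiff ℝ 1 (fun v : Fin m → ℝ => v i) :=
      (ContinuousLinearMap.proj i : (Fin m → ℝ) →L[ℝ] ℝ).contDiff
    exact (e2.comp e1).comp_contDiffOn hDF1
  set A : ((Fin m → ℝ) × (Fin m → ℝ)) → Matrix (Fin m) (Fin m) ℝ :=
    fun p i j => ∫ t in (0:ℝ)..1, ψ i j (Tm m t p) with hAdef
  have hAC : ∀ i j, ContDiffOn ℝ 1 (fun p => A p i j) U :=
    fun i j => keyC1 hU hσ (hψ i j)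
  -- A on the diagonal is the identity
  have hAzz : ∀ z ∈ Ω, A (z, z) = 1 := by
    intro z hz
    have hzU : ((z, z) : _ × _) ∈ U := ⟨hz, hz⟩
    have hTzz : ∀ t : ℝ, Tm m t ((z, z) : _ × _) = ((z, z) : _ × _) := by
      intro t; rw [Tm_apply]; simp
    -- partial derivative in second variable is DF ∘ inr
    have hpart : HasFDerivAt (fun w => E z w)
        ((DF ((z, z) : _ × _)).comp
          (((0 : (Fin m → ℝ) →L[ℝ] (Fin m → ℝ))).prod (ContinuousLinearMap.id ℝ _))) z := by
      have h2 : HasFDerivAt (fun w : Fin m → ℝ => ((z, w) : (Fin m → ℝ) × (Fin m → ℝ)))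
          (((0 : (Fin m → ℝ) →L[ℝ] (Fin m → ℝ))).prod (ContinuousLinearMap.id ℝ _)) z :=
        HasFDerivAt.prodMk (hasFDerivAt_const z z) (hasFDerivAt_id z)
      exact (hFdiff _ hzU).comp z h2
    have hid : (DF ((z, z) : _ × _)).comp
        (((0 : (Fin m → ℝ) →L[ℝ] (Fin m → ℝ))).prod (ContinuousLinearMap.id ℝ _)) =
        ContinuousLinearMap.id ℝ (Fin m → ℝ) := by
      rw [← hpart.fderiv]; exact hEid z hz
    have hval : ∀ j, DF ((z, z) : _ × _) ((0 : Fin m → ℝ), Pi.single j 1) = Pi.single j 1 := by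
      intro j
      have := congrArg (fun L : (Fin m → ℝ) →L[ℝ] (Fin m → ℝ) => L (Pi.single j 1)) hid
      simpa using this
    funext i j
    show (∫ t in (0:ℝ)..1, ψ i j (Tm m t ((z, z) : _ × _))) = (1 : Matrix (Fin m) (Fin m) ℝ) i j
    simp only [hTzz]
    rw [intervalIntegral.integral_const]
    simp only [hψdef, hval j, sub_zero, one_smul]
    rw [Matrix.one_apply, Pi.single_apply]
  -- the fundamental theorem of calculus identity
  have hAeq : ∀ z ∈ Ω, ∀ z' ∈ Ω, ∀ i,
      E z z' i = ∑ j, A ((z, z') : _ × _) i j * (z' - z) j := by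
    intro z hz z' hz' i
    set d : Fin m → ℝ := z' - z with hd
    have hpU : ((z, z') : _ × _) ∈ U := ⟨hz, hz'⟩
    have hpath : ∀ t ∈ Set.Icc (0:ℝ) 1, ((z, z + t • d) : _ × _) ∈ U := by
      intro t ht
      have := hσ _ hpU t ht
      rwa [Tm_apply] at this
    have hpathc : Continuous (fun t : ℝ => ((z, z + t • d) : (Fin m → ℝ) × (Fin m → ℝ))) := by
      fun_prop
    have hI : Set.uIcc (0:ℝ) 1 = Set.Icc (0:ℝ) 1 := Set.uIcc_of_le zero_le_one
    -- derivative of t ↦ E z (z + t • d) i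
    have hderiv : ∀ t ∈ Set.uIcc (0:ℝ) 1,
        HasDerivAt (fun t : ℝ => E z (z + t • d) i)
          (DF ((z, z + t • d) : _ × _) ((0 : Fin m → ℝ), d) i) t := by
      intro t ht
      rw [hI] at ht
      have h1 : HasDerivAt (fun t : ℝ => z + t • d) d t := by
        simpa using ((hasDerivAt_id t).smul_const d).const_add z
      have h2 : HasDerivAt (fun t : ℝ => ((z, z + t • d) : (Fin m → ℝ) × (Fin m → ℝ)))
          (((0 : Fin m → ℝ), d)) t := HasDerivAt.prodMk (hasDerivAt_const t z) h1
      have h3 := (hFdiff _ (hpath t ht)).comp_hasDerivAt t h2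
      exact ((ContinuousLinearMap.proj i).hasFDerivAt.comp_hasDerivAt t h3 :)
    have hcontd : ContinuousOn
        (fun t : ℝ => DF ((z, z + t • d) : _ × _) ((0 : Fin m → ℝ), d) i)
        (Set.uIcc (0:ℝ) 1) := by
      rw [hI]
      have hc1 : ContinuousOn (fun t : ℝ => DF ((z, z + t • d) : _ × _))
          (Set.Icc (0:ℝ) 1) := hDFc.comp hpathc.continuousOn hpath
      have hc2 : ContinuousOn (fun t : ℝ => DF ((z, z + t • d) : _ × _)
          ((0 : Fin m → ℝ), d)) (Set.Icc (0:ℝ) 1) := hc1.clm_apply continuousOn_const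
      exact (continuous_apply i).comp_continuousOn hc2
    have hftc := intervalIntegral.integral_eq_sub_of_hasDerivAt hderiv
      (hcontd.intervalIntegrable)
    have h10 : E z (z + (1:ℝ) • d) i = E z z' i := by
      simp only [one_smul, hd]; norm_num
    have h00 : E z (z + (0:ℝ) • d) i = 0 := by
      simp only [zero_smul, add_zero]
      rw [hE0 z hz]; rfl
    rw [h10, h00, sub_zero] at hftc
    -- expand (0, d) as a sum
    have hsum : ((0 : Fin m → ℝ), d) =
        ∑ j, d j • (((0 : Fin m → ℝ), Pi.single j 1) : (Fin m → ℝ) × (Fin m → ℝ)) := by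
      apply Prod.ext
      · simp [Prod.fst_sum]
      · simp only [Prod.snd_sum, Prod.smul_snd]
        rw [← Finset.univ_sum_single d]
        apply Finset.sum_congr rfl
        intro j _
        rw [← Pi.single_smul, smul_eq_mul, mul_one, Finset.univ_sum_single]
    have hptwise : ∀ t : ℝ, DF ((z, z + t • d) : _ × _) ((0 : Fin m → ℝ), d) i =
        ∑ j, d j * ψ i j ((z, z + t • d) : _ × _) := by
      intro t
      rw [hsum, map_sum]
      simp only [_root_.map_smul]
      rw [Finset.sum_apply]
      apply Finset.sum_congr rfl
      intro j _
      simp [hψdef]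
    have hint : ∀ j : Fin m, IntervalIntegrable
        (fun t => d j * ψ i j ((z, z + t • d) : _ × _)) volume 0 1 := by
      intro j
      apply ContinuousOn.intervalIntegrable
      rw [hI]
      apply ContinuousOn.mul continuousOn_const
      exact ((hψ i j).continuousOn).comp hpathc.continuousOn hpath
    calc E z z' i = ∫ t in (0:ℝ)..1, DF ((z, z + t • d) : _ × _) ((0 : Fin m → ℝ), d) i :=
          hftc.symm
      _ = ∫ t in (0:ℝ)..1, ∑ j, d j * ψ i j ((z, z + t • d) : _ × _) := by
          simp only [hptwise]
      _ = ∑ j, ∫ t in (0:ℝ)..1, d j * ψ i j ((z, z + t • d) : _ × _) :=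
          intervalIntegral.integral_finset_sum (fun j _ => hint j)
      _ = ∑ j, A ((z, z') : _ × _) i j * (z' - z) j := by
          apply Finset.sum_congr rfl
          intro j _
          rw [intervalIntegral.integral_const_mul, mul_comm]
          congr 1
  -- define G
  set G : (Fin m → ℝ) → (Fin m → ℝ) → Matrix (Fin m) (Fin m) ℝ :=
    fun z z' => (A ((z, z') : _ × _))ᵀ * A ((z, z') : _ × _) with hGdef
  have hct : ∀ M : Matrix (Fin m) (Fin m) ℝ, Mᴴ = Mᵀ :=
    fun M => Matrix.ext fun i j => star_trivial _
  have hGentry : ∀ z z' i j, G z z' i j =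
      ∑ k, A ((z, z') : _ × _) k i * A ((z, z') : _ × _) k j := by
    intro z z' i j
    simp [hGdef, Matrix.mul_apply, Matrix.transpose_apply]
  have hGpsd : ∀ z z', (G z z').PosSemidef := by
    intro z z'
    rw [hGdef]
    show ((A ((z, z') : _ × _))ᵀ * A ((z, z') : _ × _)).PosSemidef
    rw [← hct]
    exact Matrix.posSemidef_conjTranspose_mul_self _
  refine ⟨G, ?_, ?_, ?_, ?_, ?_⟩
  · -- C¹ entries
    intro i j
    have heq : (fun p : (Fin m → ℝ) × (Fin m → ℝ) => G p.1 p.2 i j) =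
        fun p => ∑ k, A p k i * A p k j := funext fun p => hGentry p.1 p.2 i j
    rw [heq]
    exact ContDiffOn.sum fun k _ => (hAC k i).mul (hAC k j)
  · -- symmetric and psd
    intro z hz z' hz'
    refine ⟨?_, hGpsd z z'⟩
    have h := (hGpsd z z').1
    rw [Matrix.IsHermitian, hct] at h
    exact h
  · -- quadratic form identity
    intro z hz z' hz'
    have expand : ∀ k, (E z z' k) ^ 2 =
        ∑ i, ∑ j, A ((z, z') : _ × _) k i * A ((z, z') : _ × _) k j *
          (z' - z) j * (z' - z) i := by
      intro k
      rw [hAeq z hz z' hz' k, pow_two, Finset.sum_mul_sum]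
      exact Finset.sum_congr rfl fun i _ => Finset.sum_congr rfl fun j _ => by ring
    calc ∑ i, (E z z' i) ^ 2
        = ∑ k, ∑ i, ∑ j, A ((z, z') : _ × _) k i * A ((z, z') : _ × _) k j *
            (z' - z) j * (z' - z) i := Finset.sum_congr rfl fun k _ => expand k
      _ = ∑ i, ∑ k, ∑ j, A ((z, z') : _ × _) k i * A ((z, z') : _ × _) k j *
            (z' - z) j * (z' - z) i := Finset.sum_comm
      _ = ∑ i, ∑ j, ∑ k, A ((z, z') : _ × _) k i * A ((z, z') : _ × _) k j *
            (z' - z) j * (z' - z) i :=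
          Finset.sum_congr rfl fun i _ => Finset.sum_comm
      _ = ∑ i, ∑ j, G z z' i j * (z' - z) j * (z' - z) i := by
          refine Finset.sum_congr rfl fun i _ => Finset.sum_congr rfl fun j _ => ?_
          rw [hGentry, Finset.sum_mul, Finset.sum_mul]
  · -- identity on the diagonal
    intro z hz
    rw [hGdef]
    show (A ((z, z) : _ × _))ᵀ * A ((z, z) : _ × _) = 1
    rw [hAzz z hz]
    simp
  · -- positive definite near the diagonal
    intro z₀ hz₀
    have hAcont : ContinuousOn A U := by
      apply continuousOn_pi.2; intro i; apply continuousOn_pi.2; intro j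
      exact (hAC i j).continuousOn
    have hdetc : ContinuousOn (fun p => (A p).det) U :=
      (continuous_id.matrix_det).comp_continuousOn hAcont
    set W := U ∩ (fun p => (A p).det) ⁻¹' ({(0:ℝ)}ᶜ) with hWdef
    have hWopen : IsOpen W := hdetc.isOpen_inter_preimage hU isOpen_compl_singleton
    have hmemW : ((z₀, z₀) : (Fin m → ℝ) × (Fin m → ℝ)) ∈ W := by
      refine ⟨⟨hz₀, hz₀⟩, ?_⟩
      simp [hAzz z₀ hz₀]
    refine ⟨W, hWopen.mem_nhds hmemW, ?_⟩
    rintro ⟨z, z'⟩ ⟨⟨hpU', hdet⟩, -⟩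
    have hdet' : (A ((z, z') : _ × _)).det ≠ 0 := hdet
    have hdetG : (G z z').det ≠ 0 := by
      rw [hGdef]
      show ((A ((z, z') : _ × _))ᵀ * A ((z, z') : _ × _)).det ≠ 0
      rw [Matrix.det_mul, Matrix.det_transpose]
      exact mul_ne_zero hdet' hdet'
    exact (hGpsd z z').posDef_iff_isUnit.mpr
      ((Matrix.isUnit_iff_isUnit_det _).2 (isUnit_iff_ne_zero.2 hdetG))
end
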